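/- For any locally finite graph G, the combinatorial (physical) Laplacian Δ_G, defined on the finitely supported functions C_c(V) ⊆ ℓ²(V) by (Δ_G f)(x) = Σ_{y ~ x} (f(x) − f(y)), is a symmetric operator which is essentially self-adjoint on C_c(V). -/

import Mathlib

noncomputable section

open scoped ComplexConjugate

namespace DefIdx

/-- The Hilbert space `ℓ²(V)` of square-summable complex functions on `V`. -/
abbrev L2 (V : Type*) := lp (fun _ : V => ℂ) 2

lemma memℓp_of_finite {V : Type*} {f : V → ℂ} (h : {x | f x ≠ 0}.Finite) :
    Memℓp f 2 :=
  (memℓp_zero h).of_exponent_ge (by simp)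

/-- The subspace `C_c(V)` of finitely supported elements of `ℓ²(V)`. -/
def Cc (V : Type*) : Submodule ℂ (L2 V) where
  carrier := {f | {x | (f : ∀ _ : V, ℂ) x ≠ 0}.Finite}
  zero_mem' := by
    simp only [Set.mem_setOf_eq, lp.coeFn_zero, Pi.zero_apply, ne_eq, not_true_eq_false]
    simp
  add_mem' := by
    intro f g hf hg
    refine (hf.union hg).subset ?_
    intro x hx
    simp only [Set.mem_setOf_eq, lp.coeFn_add, Pi.add_apply] at hx ⊢
    by_contra hc
    try push_neg at hc
    simp only [Set.mem_union, Set.mem_setOf_eq, not_or, not_not] at hc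
    simp [hc.1, hc.2] at hx
  smul_mem' := by
    intro c f hf
    refine hf.subset ?_
    intro x hx
    simp only [Set.mem_setOf_eq, lp.coeFn_smul, Pi.smul_apply, smul_eq_mul] at hx ⊢
    intro h0
    simp [h0] at hx

section Adjacency

variable {V : Type*}

/-- The pointwise action of the adjacency matrix of a locally finite graph. -/
def adjA (G : SimpleGraph V) (hG : G.LocallyFinite) (f : V → ℂ) (x : V) : ℂ :=
  ∑ y ∈ @SimpleGraph.neighborFinset V G x (hG x), f y

lemma adjA_support (G : SimpleGraph V) (hG : G.LocallyFinite) {f : V → ℂ}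
    (hf : {x | f x ≠ 0}.Finite) : {x | adjA G hG f x ≠ 0}.Finite := by
  have hsub : {x | adjA G hG f x ≠ 0} ⊆ ⋃ y ∈ {x | f x ≠ 0}, (G.neighborSet y) := by
    intro x hx
    obtain ⟨y, hy, hfy⟩ := Finset.exists_ne_zero_of_sum_ne_zero hx
    have hadj : G.Adj x y := by
      have := @SimpleGraph.mem_neighborFinset V G x (hG x) y
      exact this.mp hy
    exact Set.mem_biUnion hfy (SimpleGraph.mem_neighborSet G y x |>.mpr hadj.symm)
  exact (hf.biUnion fun y _ => by haveI := hG y; exact (G.neighborSet y).toFinite).subset hsub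

/-- The adjacency operator of a locally finite graph, as a densely defined operator
on `ℓ²(V)` with domain the finitely supported functions. -/
def adjOp (G : SimpleGraph V) (hG : G.LocallyFinite) : L2 V →ₗ.[ℂ] L2 V where
  domain := Cc V
  toFun :=
    { toFun := fun f => ⟨adjA G hG f, memℓp_of_finite (adjA_support G hG f.2)⟩
      map_add' := by
        intro f g
        apply lp.ext
        funext x
        simp only [lp.coeFn_add, Pi.add_apply]
        show adjA G hG (((f : L2 V) + (g : L2 V) : L2 V)) x = _
        simp only [adjA, lp.coeFn_add, Pi.add_apply]
        exact Finset.sum_add_distrib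
      map_smul' := by
        intro c f
        apply lp.ext
        funext x
        simp only [RingHom.id_apply, lp.coeFn_smul, Pi.smul_apply, smul_eq_mul]
        show adjA G hG ((c • (f : L2 V) : L2 V)) x = _
        simp only [adjA, lp.coeFn_smul, Pi.smul_apply, smul_eq_mul]
        exact (Finset.mul_sum _ _ _).symm }

/-- The pointwise action of the combinatorial (physical) Laplacian. -/
def lapA (G : SimpleGraph V) (hG : G.LocallyFinite) (f : V → ℂ) (x : V) : ℂ :=
  ∑ y ∈ @SimpleGraph.neighborFinset V G x (hG x), (f x - f y)

lemma lapA_support (G : SimpleGraph V) (hG : G.LocallyFinite) {f : V → ℂ}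
    (hf : {x | f x ≠ 0}.Finite) : {x | lapA G hG f x ≠ 0}.Finite := by
  have hsub : {x | lapA G hG f x ≠ 0} ⊆
      {x | f x ≠ 0} ∪ ⋃ y ∈ {x | f x ≠ 0}, (G.neighborSet y) := by
    intro x hx
    by_contra hc
    simp only [Set.mem_union, Set.mem_setOf_eq, not_or, not_not] at hc
    obtain ⟨hfx, hmem⟩ := hc
    apply hx
    show lapA G hG f x = 0
    unfold lapA
    refine Finset.sum_eq_zero fun y hy => ?_
    have hadj : G.Adj x y := (@SimpleGraph.mem_neighborFinset V G x (hG x) y).mp hy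
    have hfy : f y = 0 := by
      by_contra hfy
      exact hmem (Set.mem_biUnion hfy ((SimpleGraph.mem_neighborSet G y x).mpr hadj.symm))
    rw [hfx, hfy, sub_zero]
  refine Set.Finite.subset ?_ hsub
  exact hf.union (hf.biUnion fun y _ => by haveI := hG y; exact (G.neighborSet y).toFinite)

/-- The combinatorial (physical) Laplacian of a locally finite graph, as a densely
defined operator on `ℓ²(V)` with domain the finitely supported functions. -/
def lapOp (G : SimpleGraph V) (hG : G.LocallyFinite) : L2 V →ₗ.[ℂ] L2 V where
  domain := Cc V
  toFun :=
    { toFun := fun f => ⟨lapA G hG f, memℓp_of_finite (lapA_support G hG f.2)⟩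
      map_add' := by
        intro f g
        apply lp.ext
        funext x
        simp only [lp.coeFn_add, Pi.add_apply]
        show lapA G hG (((f : L2 V) + (g : L2 V) : L2 V)) x = _
        simp only [lapA, lp.coeFn_add, Pi.add_apply]
        rw [← Finset.sum_add_distrib]
        exact Finset.sum_congr rfl fun y _ => by ring
      map_smul' := by
        intro c f
        apply lp.ext
        funext x
        simp only [RingHom.id_apply, lp.coeFn_smul, Pi.smul_apply, smul_eq_mul]
        show lapA G hG ((c • (f : L2 V) : L2 V)) x = _
        simp only [lapA, lp.coeFn_smul, Pi.smul_apply, smul_eq_mul]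
        rw [Finset.mul_sum]
        exact Finset.sum_congr rfl fun y _ => by ring }

end Adjacency

section Jacobi

/-- The pointwise action of the Jacobi matrix with off-diagonal entries `a n` and
diagonal entries `b n` (with the convention `a (-1) = 0`). -/
def jacA (a b : ℕ → ℝ) (f : ℕ → ℂ) (n : ℕ) : ℂ :=
  (if n = 0 then 0 else (a (n - 1) : ℂ) * f (n - 1)) + (b n : ℂ) * f n + (a n : ℂ) * f (n + 1)

lemma jacA_support (a b : ℕ → ℝ) {f : ℕ → ℂ} (hf : {n | f n ≠ 0}.Finite) :
    {n | jacA a b f n ≠ 0}.Finite := by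
  have hsub : {n | jacA a b f n ≠ 0} ⊆
      (fun m => m + 1) '' {n | f n ≠ 0} ∪ {n | f n ≠ 0} ∪ (fun m => m - 1) '' {n | f n ≠ 0} := by
    intro n hn
    by_contra hc
    simp only [Set.mem_union, not_or] at hc
    apply hn
    show jacA a b f n = 0
    have h1 : f n = 0 := by
      by_contra h; exact hc.1.2 h
    have h3 : f (n + 1) = 0 := by
      by_contra h
      exact hc.2 ⟨n + 1, h, by show n + 1 - 1 = n; omega⟩
    rcases Nat.eq_zero_or_pos n with h0 | h0
    · subst h0; simp [jacA, h1, h3]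
    · have h2 : f (n - 1) = 0 := by
        by_contra h
        exact hc.1.1 ⟨n - 1, h, by show n - 1 + 1 = n; omega⟩
      simp [jacA, h1, h2, h3]
  refine Set.Finite.subset ?_ hsub
  exact ((hf.image _).union hf).union (hf.image _)

/-- The Jacobi matrix with off-diagonal entries `a n > 0` and diagonal entries `b n`,
as a densely defined operator on `ℓ²(ℕ)` with domain the finitely supported sequences. -/
def jacOp (a b : ℕ → ℝ) : L2 ℕ →ₗ.[ℂ] L2 ℕ where
  domain := Cc ℕ
  toFun :=
    { toFun := fun f => ⟨jacA a b f, memℓp_of_finite (jacA_support a b f.2)⟩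
      map_add' := by
        intro f g
        apply lp.ext
        funext n
        simp only [lp.coeFn_add, Pi.add_apply]
        show jacA a b (((f : L2 ℕ) + (g : L2 ℕ) : L2 ℕ)) n = _
        simp only [jacA, lp.coeFn_add, Pi.add_apply]
        split <;> ring
      map_smul' := by
        intro c f
        apply lp.ext
        funext n
        simp only [RingHom.id_apply, lp.coeFn_smul, Pi.smul_apply, smul_eq_mul]
        show jacA a b ((c • (f : L2 ℕ) : L2 ℕ)) n = _
        simp only [jacA, lp.coeFn_smul, Pi.smul_apply, smul_eq_mul]
        split <;> ring }

end Jacobi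

section Eta

variable {H : Type*} [NormedAddCommGroup H] [InnerProductSpace ℂ H] [CompleteSpace H]

/-- The deficiency subspace `ker (T* - z)` of a (partially defined) operator. -/
def defSubspace (T : H →ₗ.[ℂ] H) (z : ℂ) : Submodule ℂ T.adjoint.domain :=
  LinearMap.ker (T.adjoint.toFun - z • T.adjoint.domain.subtype)

/-- The deficiency index `η₊(T) = dim ker (T* - i)`. -/
def etaP (T : H →ₗ.[ℂ] H) : Cardinal := Module.rank ℂ (defSubspace T Complex.I)

/-- The deficiency index `η₋(T) = dim ker (T* + i)`. -/
def etaM (T : H →ₗ.[ℂ] H) : Cardinal := Module.rank ℂ (defSubspace T (-Complex.I))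

/-- A partially defined operator is symmetric if `⟪T f, g⟫ = ⟪f, T g⟫` on its domain. -/
def IsSymm (T : H →ₗ.[ℂ] H) : Prop :=
  ∀ f g : T.domain, (inner ℂ (T f) (g : H) : ℂ) = inner ℂ (f : H) (T g)

/-- A densely defined operator is essentially self-adjoint if its closure is self-adjoint. -/
def EssSelfAdj (T : H →ₗ.[ℂ] H) : Prop :=
  T.closure.adjoint = T.closure

/-- The restriction of the sum of two partially defined operators to the domain
of the first one, assuming domain inclusion. -/
def sumRestrict (S T : H →ₗ.[ℂ] H) (h : S.domain ≤ T.domain) : H →ₗ.[ℂ] H :=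
  ⟨S.domain, S.toFun + T.toFun.comp (Submodule.inclusion h)⟩

/-- The sum of a partially defined operator and a bounded operator, with the
domain of the former. -/
def addBdd (S : H →ₗ.[ℂ] H) (B : H →L[ℂ] H) : H →ₗ.[ℂ] H :=
  ⟨S.domain, S.toFun + (B : H →ₗ[ℂ] H).comp S.domain.subtype⟩

end Eta

section Graphs

variable {V : Type*}

/-- The sphere of radius `n` around the vertex `v` (w.r.t. the graph metric). -/
def sphere (G : SimpleGraph V) (v : V) (n : ℕ) : Set V := {w | G.dist v w = n}

/-- A connected graph is an antitree with root `v` if every vertex `w ≠ v` at distance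
`n ≥ 1` from `v` has exactly `S_{n-1}(v) ∪ S_{n+1}(v)` as its set of neighbours. -/
def IsAntitree (G : SimpleGraph V) (v : V) : Prop :=
  G.Connected ∧ ∀ w, w ≠ v →
    G.neighborSet w = sphere G v (G.dist v w - 1) ∪ sphere G v (G.dist v w + 1)

/-- A function is radially symmetric (w.r.t. the root `v`) if it is constant on
each sphere around `v`. -/
def RadSymm (G : SimpleGraph V) (v : V) (f : V → ℂ) : Prop :=
  ∀ x y, G.dist v x = G.dist v y → f x = f y

/-- The average of `f` over the sphere of radius `n` around `v`. -/
def sphAvg (G : SimpleGraph V) (v : V) (hfin : ∀ n, (sphere G v n).Finite)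
    (f : V → ℂ) (n : ℕ) : ℂ :=
  (1 / ((sphere G v n).ncard : ℂ)) * ∑ y ∈ (hfin n).toFinset, f y

/-- The sphere-averaging map `P`. -/
def sphP (G : SimpleGraph V) (v : V) (hfin : ∀ n, (sphere G v n).Finite)
    (f : V → ℂ) (x : V) : ℂ :=
  sphAvg G v hfin f (G.dist v x)

/-- The disjoint union of `n` copies of a graph. -/
def copies (G : SimpleGraph V) (n : ℕ) : SimpleGraph (Fin n × V) where
  Adj p q := p.1 = q.1 ∧ G.Adj p.2 q.2
  symm := ⟨fun p q h => ⟨h.1.symm, h.2.symm⟩⟩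
  loopless := ⟨fun q h => G.loopless.irrefl q.2 h.2⟩

/-- The disjoint union of copies of a locally finite graph is locally finite. -/
def copiesLF (G : SimpleGraph V) (hG : G.LocallyFinite) (n : ℕ) :
    (copies G n).LocallyFinite := fun p =>
  Set.Finite.fintype (by
    haveI := hG p.2
    have hsub : (copies G n).neighborSet p ⊆ (fun w => (p.1, w)) '' (G.neighborSet p.2) := by
      rintro ⟨i, w⟩ ⟨h1, h2⟩
      exact ⟨w, h2, by simp [h1]⟩
    exact ((G.neighborSet p.2).toFinite.image _).subset hsub)

end Graphs


section Abstract

open LinearPMap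

variable {H : Type*} [NormedAddCommGroup H] [InnerProductSpace ℂ H] [CompleteSpace H]

local notation "⟪" x ", " y "⟫" => @inner ℂ _ _ x y

theorem closure_eq_self' {f : H →ₗ.[ℂ] H} (hf : f.IsClosed) : f.closure = f := by
  apply eq_of_eq_graph
  rw [← hf.isClosable.graph_closure_eq_closure_graph]
  exact hf.submodule_topologicalClosure_eq

theorem adjoint_graph_eq (T : H →ₗ.[ℂ] H) (hd : Dense (T.domain : Set H)) :
    (T.adjoint.graph : Set (H × H)) =
      {p : H × H | ∀ x : T.domain, ⟪p.2, (x : H)⟫ = ⟪p.1, T x⟫} := by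
  ext ⟨y, w⟩
  simp only [SetLike.mem_coe, mem_graph_iff, Set.mem_setOf_eq]
  constructor
  · rintro ⟨v, hv1, hv2⟩ x
    rw [← hv1, ← hv2]
    exact adjoint_isFormalAdjoint hd v x
  · intro h
    have hy : y ∈ T.adjoint.domain := mem_adjoint_domain_of_exists y ⟨w, fun x => h x⟩
    exact ⟨⟨y, hy⟩, rfl, adjoint_apply_eq hd _ fun x => h x⟩

theorem adjoint_isClosed (T : H →ₗ.[ℂ] H) (hd : Dense (T.domain : Set H)) :
    T.adjoint.IsClosed := by
  show IsClosed (T.adjoint.graph : Set (H × H))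
  rw [adjoint_graph_eq T hd]
  have : {p : H × H | ∀ x : T.domain, ⟪p.2, (x : H)⟫ = ⟪p.1, T x⟫}
      = ⋂ x : T.domain, {p : H × H | ⟪p.2, (x : H)⟫ = ⟪p.1, T x⟫} := by
    ext p; simp [Set.mem_iInter]
  rw [this]
  exact isClosed_iInter fun x => isClosed_eq
    (Continuous.inner continuous_snd continuous_const)
    (Continuous.inner continuous_fst continuous_const)

theorem closure_isFormalAdjoint_adjoint (T : H →ₗ.[ℂ] H) (hd : Dense (T.domain : Set H))
    (hTc : T.IsClosable) : T.closure.IsFormalAdjoint T.adjoint := by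
  intro x y
  have hgr : ((x : H), T.closure x) ∈ closure (T.graph : Set (H × H)) := by
    rw [← Submodule.topologicalClosure_coe, hTc.graph_closure_eq_closure_graph]
    exact T.closure.mem_graph x
  have hclosed : IsClosed {p : H × H | ⟪p.2, (y : H)⟫ = ⟪p.1, T.adjoint y⟫} :=
    isClosed_eq (Continuous.inner continuous_snd continuous_const)
      (Continuous.inner continuous_fst continuous_const)
  have hsub : (T.graph : Set (H × H)) ⊆ {p : H × H | ⟪p.2, (y : H)⟫ = ⟪p.1, T.adjoint y⟫} := by
    rintro ⟨p1, p2⟩ hp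
    rw [SetLike.mem_coe, mem_graph_iff] at hp
    obtain ⟨a, h1, h2⟩ := hp
    simp only [Set.mem_setOf_eq] at *
    rw [← h1, ← h2]
    calc ⟪T a, (y : H)⟫ = conj ⟪(y : H), T a⟫ := (inner_conj_symm _ _).symm
      _ = conj ⟪T.adjoint y, (a : H)⟫ := by rw [adjoint_isFormalAdjoint hd y a]
      _ = ⟪(a : H), T.adjoint y⟫ := inner_conj_symm _ _
  exact (hclosed.closure_subset_iff.mpr hsub) hgr

theorem closure_adjoint_eq (T : H →ₗ.[ℂ] H) (hd : Dense (T.domain : Set H))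
    (hTc : T.IsClosable) : T.closure.adjoint = T.adjoint := by
  have hd' : Dense (T.closure.domain : Set H) :=
    hd.mono (fun x hx => (T.le_closure.1 hx : x ∈ T.closure.domain))
  apply le_antisymm
  · refine IsFormalAdjoint.le_adjoint hd ?_
    intro x y
    obtain ⟨x', hx1, hx2⟩ := exists_of_le T.le_closure x
    rw [hx2, hx1]
    exact LinearPMap.IsFormalAdjoint.symm (adjoint_isFormalAdjoint hd') x' y
  · exact IsFormalAdjoint.le_adjoint hd' (closure_isFormalAdjoint_adjoint T hd hTc)

set_option maxHeartbeats 1000000 in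
theorem essSelfAdj_of_ker (T : H →ₗ.[ℂ] H) (hd : Dense (T.domain : Set H)) (hs : IsSymm T)
    (hkerP : ∀ v : T.adjoint.domain, T.adjoint v = Complex.I • (v : H) → (v : H) = 0)
    (hkerM : ∀ v : T.adjoint.domain, T.adjoint v = (-Complex.I) • (v : H) → (v : H) = 0) :
    EssSelfAdj T := by
  have hfa : T.IsFormalAdjoint T := fun x y => hs x y
  have hle : T ≤ T.adjoint := hfa.le_adjoint hd
  have hacl := adjoint_isClosed T hd
  have hTc : T.IsClosable := hacl.isClosable.leIsClosable hle
  have hce : T.closure ≤ T.adjoint := by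
    have h := hacl.isClosable.closure_mono hle
    rwa [closure_eq_self' hacl] at h
  have hd' : Dense (T.closure.domain : Set H) :=
    hd.mono fun x hx => (T.le_closure.1 hx)
  have hca : T.closure.adjoint = T.adjoint := closure_adjoint_eq T hd hTc
  -- symmetry of the closure
  have hsc : ∀ x y : T.closure.domain, ⟪T.closure x, (y : H)⟫ = ⟪(x : H), T.closure y⟫ := by
    intro x y
    have h1 := closure_isFormalAdjoint_adjoint T hd hTc x ⟨(y : H), hce.1 y.2⟩
    rw [← hce.2 (rfl : ((y : H)) = ((⟨(y : H), hce.1 y.2⟩ : T.adjoint.domain) : H))] at h1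
    exact h1
  -- the norm identity
  have hni : ∀ x : T.closure.domain,
      ‖T.closure x - Complex.I • (x : H)‖ ^ 2 = ‖T.closure x‖ ^ 2 + ‖(x : H)‖ ^ 2 := by
    intro x
    have hrealz : (⟪T.closure x, (x : H)⟫).im = 0 := by
      have h := hsc x x
      have h' : conj ⟪T.closure x, (x : H)⟫ = ⟪T.closure x, (x : H)⟫ := by
        rw [inner_conj_symm]; exact h.symm
      exact Complex.conj_eq_iff_im.mp h'
    rw [@norm_sub_sq ℂ]
    have h2 : ⟪T.closure x, Complex.I • (x : H)⟫ = Complex.I * ⟪T.closure x, (x : H)⟫ :=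
      inner_smul_right _ _ _
    have him : RCLike.re (⟪T.closure x, Complex.I • (x : H)⟫) = 0 := by
      rw [h2]
      simp [Complex.mul_re, hrealz]
    rw [him, norm_smul]
    simp
  -- the graph as a complete space
  have hGrclosed : IsClosed (T.closure.graph : Set (H × H)) := hTc.closure_isClosed
  haveI : CompleteSpace T.closure.graph := hGrclosed.completeSpace_coe
  set Φ : T.closure.graph →L[ℂ] H :=
    (ContinuousLinearMap.snd ℂ H H - Complex.I • ContinuousLinearMap.fst ℂ H H).comp
      (Submodule.subtypeL T.closure.graph) with hΦdef
  have hΦapp : ∀ r : T.closure.graph, Φ r = (r : H × H).2 - Complex.I • (r : H × H).1 :=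
    fun r => rfl
  have hΦbound : ∀ r : T.closure.graph, ‖r‖ ≤ ‖Φ r‖ := by
    intro r
    obtain ⟨x, hx1, hx2⟩ := (LinearPMap.mem_graph_iff T.closure).mp r.2
    have hval : Φ r = T.closure x - Complex.I • (x : H) := by
      rw [hΦapp, ← hx1, ← hx2]
    have hnr : ‖r‖ = max ‖(x : H)‖ ‖T.closure x‖ := by
      rw [← Submodule.norm_coe, Prod.norm_def, ← hx1, ← hx2]
    have hmaxnn : (0 : ℝ) ≤ max ‖(x : H)‖ ‖T.closure x‖ :=
      le_trans (norm_nonneg _) (le_max_left _ _)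
    have h3 : (max ‖(x : H)‖ ‖T.closure x‖) ^ 2 ≤ ‖T.closure x - Complex.I • (x : H)‖ ^ 2 := by
      rw [hni x]
      rcases le_total ‖(x : H)‖ ‖T.closure x‖ with h | h
      · rw [max_eq_right h]; nlinarith [norm_nonneg ((x : H))]
      · rw [max_eq_left h]; nlinarith [norm_nonneg (T.closure x)]
    rw [hnr, hval]
    exact (pow_le_pow_iff_left₀ hmaxnn (norm_nonneg _) (by norm_num)).mp h3
  have hΦanti : AntilipschitzWith 1 Φ :=
    Φ.antilipschitz_of_bound (by simpa using hΦbound)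
  -- the operator A = T.closure - i
  set A : T.closure.domain →ₗ[ℂ] H :=
    T.closure.toFun - Complex.I • T.closure.domain.subtype with hAdef
  have hAapp : ∀ x : T.closure.domain, A x = T.closure x - Complex.I • (x : H) := fun x => rfl
  -- the range of A is closed
  have hRrange : ((LinearMap.range A : Submodule ℂ H) : Set H) = Set.range Φ := by
    ext b
    constructor
    · rintro ⟨x, rfl⟩
      exact ⟨⟨((x : H), T.closure x), T.closure.mem_graph x⟩, (hAapp x).symm⟩
    · rintro ⟨r, rfl⟩
      obtain ⟨x, hx1, hx2⟩ := (LinearPMap.mem_graph_iff T.closure).mp r.2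
      exact ⟨x, by rw [hAapp, hΦapp, ← hx1, ← hx2]⟩
  have hRc : IsClosed ((LinearMap.range A : Submodule ℂ H) : Set H) := by
    rw [hRrange]
    exact hΦanti.isClosed_range Φ.uniformContinuous
  -- trivial orthogonal complement
  have horth : (LinearMap.range A)ᗮ = ⊥ := by
    rw [Submodule.eq_bot_iff]
    intro v hv
    have hv' : ∀ x : T.closure.domain, ⟪T.closure x - Complex.I • (x : H), v⟫ = 0 := by
      intro x
      exact (Submodule.mem_orthogonal _ v).mp hv _ ⟨x, hAapp x⟩
    have hvadj : ∀ x : T.domain, ⟪((-Complex.I) • v : H), (x : H)⟫ = ⟪v, T x⟫ := by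
      intro x
      obtain ⟨x', h1, h2⟩ := exists_of_le T.le_closure x
      have h0 := hv' x'
      rw [inner_sub_left, sub_eq_zero] at h0
      have h0' : ⟪T x, v⟫ = (-Complex.I) * ⟪(x : H), v⟫ := by
        rw [h2, h0, inner_smul_left, h1]
        simp [Complex.conj_I]
      calc ⟪((-Complex.I) • v : H), (x : H)⟫ = conj (-Complex.I) * ⟪v, (x : H)⟫ :=
            inner_smul_left _ _ _
        _ = Complex.I * ⟪v, (x : H)⟫ := by simp [Complex.conj_I]
        _ = conj ((-Complex.I) * ⟪(x : H), v⟫) := by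
            rw [map_mul, inner_conj_symm]
            simp [Complex.conj_I]
        _ = conj ⟪T x, v⟫ := by rw [h0']
        _ = ⟪v, T x⟫ := inner_conj_symm _ _
    have hvdom : v ∈ T.adjoint.domain :=
      mem_adjoint_domain_of_exists v ⟨(-Complex.I) • v, hvadj⟩
    have hval : T.adjoint ⟨v, hvdom⟩ = (-Complex.I) • v := adjoint_apply_eq hd _ hvadj
    exact hkerM ⟨v, hvdom⟩ hval
  -- surjectivity
  haveI : CompleteSpace (LinearMap.range A) := hRc.completeSpace_coe
  have hRtop : LinearMap.range A = ⊤ := Submodule.orthogonal_eq_bot_iff.mp horth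
  have hsurj : ∀ b : H, ∃ x : T.closure.domain, T.closure x - Complex.I • (x : H) = b := by
    intro b
    have : b ∈ LinearMap.range A := by rw [hRtop]; trivial
    obtain ⟨x, hx⟩ := this
    exact ⟨x, by rw [← hAapp]; exact hx⟩
  -- the key step
  have hkey : ∀ u : T.adjoint.domain, ∃ hm : (u : H) ∈ T.closure.domain,
      T.closure ⟨(u : H), hm⟩ = T.adjoint u := by
    intro u
    obtain ⟨x, hx⟩ := hsurj (T.adjoint u - Complex.I • (u : H))
    set x' : T.adjoint.domain := ⟨(x : H), hce.1 x.2⟩ with hx'def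
    have hTx' : T.adjoint x' = T.closure x := (hce.2 rfl).symm
    have hveq : T.adjoint (u - x') = Complex.I • ((u : H) - (x' : H)) := by
      rw [LinearPMap.map_sub, hTx']
      have hTu : T.adjoint u = T.closure x - Complex.I • (x : H) + Complex.I • (u : H) := by
        rw [hx]; abel
      rw [hTu, smul_sub]
      abel
    have hz : ((u - x' : T.adjoint.domain) : H) = 0 := by
      apply hkerP (u - x')
      rw [hveq, AddSubgroupClass.coe_sub]
    have h0 : (u : H) - (x' : H) = 0 := by
      rw [← AddSubgroupClass.coe_sub]; exact hz
    have hux : (u : H) = (x : H) := sub_eq_zero.mp h0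
    have hm : (u : H) ∈ T.closure.domain := by rw [hux]; exact x.2
    refine ⟨hm, ?_⟩
    have hxx : (⟨(u : H), hm⟩ : T.closure.domain) = x := Subtype.ext hux
    rw [hxx]
    have h := hx
    rw [hux] at h
    have heq : T.closure x = T.adjoint u := by
      have h2 : T.closure x - Complex.I • (x : H) = T.adjoint u - Complex.I • (x : H) := h
      exact sub_left_inj.mp h2
    exact heq
  -- conclusion
  have hlea : T.adjoint ≤ T.closure := by
    constructor
    · intro z hz
      obtain ⟨hm, _⟩ := hkey ⟨z, hz⟩
      exact hm
    · intro u y hxy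
      obtain ⟨hm, heq⟩ := hkey u
      have hy : y = ⟨(u : H), hm⟩ := Subtype.ext hxy.symm
      rw [hy]
      exact heq.symm
  have hfinal : T.adjoint = T.closure := le_antisymm hlea hce
  show T.closure.adjoint = T.closure
  rw [hca, hfinal]

end Abstract

section Concrete

open LinearPMap

local notation "⟪" x ", " y "⟫" => @inner ℂ _ _ x y

theorem cc_dense (V : Type*) : Dense ((Cc V : Submodule ℂ (L2 V)) : Set (L2 V)) := by
  classical
  intro f
  have hsum := lp.hasSum_single (E := fun _ : V => ℂ) (p := 2) (by norm_num) f
  refine mem_closure_of_tendsto hsum ?_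
  filter_upwards with s
  show (∑ i ∈ s, lp.single 2 i (f i)) ∈ Cc V
  show {x | (((∑ i ∈ s, lp.single 2 i (f i)) : L2 V) : ∀ _ : V, ℂ) x ≠ 0}.Finite
  refine Set.Finite.subset s.finite_toSet ?_
  intro x hx
  simp only [Set.mem_setOf_eq] at hx
  by_contra hxs
  apply hx
  rw [lp.coeFn_sum]
  simp only [Finset.sum_apply]
  refine Finset.sum_eq_zero fun i hi => ?_
  exact lp.single_apply_ne 2 i _ (fun h => hxs (h ▸ hi))

variable {V : Type*}

theorem single_coe [DecidableEq V] (x : V) (j : V) :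
    (lp.single 2 x (1 : ℂ) : L2 V) j = if j = x then 1 else 0 := by
  by_cases h : j = x
  · subst h; simp [lp.single_apply_self]
  · simp [lp.single_apply_ne 2 x _ h, h]

theorem lap_isSymm (G : SimpleGraph V) (hG : G.LocallyFinite) : IsSymm (lapOp G hG) := by
  classical
  intro f g
  have hf : {x | ((f : L2 V) : ∀ _ : V, ℂ) x ≠ 0}.Finite := f.2
  have hg : {x | ((g : L2 V) : ∀ _ : V, ℂ) x ≠ 0}.Finite := g.2
  set K₀ : Finset V := hf.toFinset ∪ hg.toFinset with hK₀
  set K : Finset V := K₀ ∪ K₀.biUnion (fun x => @SimpleGraph.neighborFinset V G x (hG x)) with hK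
  have hfK : ∀ x : V, (f : L2 V) x ≠ 0 → x ∈ K₀ := by
    intro x hx; rw [hK₀, Finset.mem_union]; left; rwa [Set.Finite.mem_toFinset]
  have hgK : ∀ x : V, (g : L2 V) x ≠ 0 → x ∈ K₀ := by
    intro x hx; rw [hK₀, Finset.mem_union]; right; rwa [Set.Finite.mem_toFinset]
  have hK₀K : K₀ ⊆ K := Finset.subset_union_left
  have hNK : ∀ x ∈ K₀, @SimpleGraph.neighborFinset V G x (hG x) ⊆ K := by
    intro x hx y hy
    rw [hK, Finset.mem_union]
    right
    exact Finset.mem_biUnion.mpr ⟨x, hx, hy⟩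
  have expand : ∀ (a b : L2 V), (∀ x : V, (b : ∀ _ : V, ℂ) x ≠ 0 → x ∈ K) →
      ⟪a, b⟫ = ∑ x ∈ K, conj ((a : ∀ _ : V, ℂ) x) * (b : ∀ _ : V, ℂ) x := by
    intro a b hb
    rw [lp.inner_eq_tsum]
    refine (tsum_eq_sum (s := K) ?_).trans (Finset.sum_congr rfl fun x _ => RCLike.inner_apply' _ _)
    intro x hx
    rw [RCLike.inner_apply']
    by_cases h : (b : ∀ _ : V, ℂ) x = 0
    · rw [h, mul_zero]
    · exact absurd (hb x h) hx
  have hTf : ∀ x : V, (((lapOp G hG) f : L2 V) : ∀ _ : V, ℂ) x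
      = lapA G hG ((f : L2 V) : ∀ _ : V, ℂ) x := fun x => rfl
  have hTg : ∀ x : V, (((lapOp G hG) g : L2 V) : ∀ _ : V, ℂ) x
      = lapA G hG ((g : L2 V) : ∀ _ : V, ℂ) x := fun x => rfl
  have hTgsupp : ∀ x : V, (((lapOp G hG) g : L2 V) : ∀ _ : V, ℂ) x ≠ 0 → x ∈ K := by
    intro x hx
    rw [hTg] at hx
    by_contra hxK
    apply hx
    have hxK₀ : x ∉ K₀ := fun h => hxK (hK₀K h)
    unfold lapA
    refine Finset.sum_eq_zero fun y hy => ?_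
    have hgx : (g : L2 V) x = 0 := by
      by_contra h; exact hxK₀ (hgK x h)
    have hgy : (g : L2 V) y = 0 := by
      by_contra h
      apply hxK
      apply hNK y (hgK y h)
      rw [SimpleGraph.mem_neighborFinset]
      exact ((SimpleGraph.mem_neighborFinset G x y).mp hy).symm
    rw [hgx, hgy, sub_zero]
  rw [expand _ _ (fun x hx => hK₀K (hgK x hx)), expand _ _ hTgsupp]
  have claim1 : ∀ x ∈ K, conj ((((lapOp G hG) f : L2 V) : ∀ _ : V, ℂ) x) * (g : L2 V) x
      = ∑ y ∈ K, if G.Adj x y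
          then conj ((f : L2 V) x - (f : L2 V) y) * (g : L2 V) x else 0 := by
    intro x _
    rw [hTf]
    by_cases hgx : (g : L2 V) x = 0
    · rw [hgx, mul_zero]
      exact (Finset.sum_eq_zero fun y _ => by split <;> simp).symm
    · have hNx := hNK x (hgK x hgx)
      have hfilter : K.filter (fun y => G.Adj x y) = @SimpleGraph.neighborFinset V G x (hG x) := by
        ext y
        simp only [Finset.mem_filter, SimpleGraph.mem_neighborFinset]
        exact ⟨fun h => h.2, fun h =>
          ⟨hNx ((SimpleGraph.mem_neighborFinset G x y).mpr h), h⟩⟩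
      rw [← Finset.sum_filter, hfilter, ← Finset.sum_mul, ← map_sum]
      rfl
  have claim2 : ∀ x ∈ K, conj (((f : L2 V) : ∀ _ : V, ℂ) x)
        * (((lapOp G hG) g : L2 V) : ∀ _ : V, ℂ) x
      = ∑ y ∈ K, if G.Adj x y
          then conj ((f : L2 V) x) * ((g : L2 V) x - (g : L2 V) y) else 0 := by
    intro x _
    rw [hTg]
    by_cases hfx : (f : L2 V) x = 0
    · rw [hfx]
      simp only [_root_.map_zero, zero_mul]
      exact (Finset.sum_eq_zero fun y _ => by split <;> simp).symm
    · have hNx := hNK x (hfK x hfx)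
      have hfilter : K.filter (fun y => G.Adj x y) = @SimpleGraph.neighborFinset V G x (hG x) := by
        ext y
        simp only [Finset.mem_filter, SimpleGraph.mem_neighborFinset]
        exact ⟨fun h => h.2, fun h =>
          ⟨hNx ((SimpleGraph.mem_neighborFinset G x y).mpr h), h⟩⟩
      rw [← Finset.sum_filter, hfilter, ← Finset.mul_sum]
      rfl
  rw [Finset.sum_congr rfl claim1, Finset.sum_congr rfl claim2]
  have key : ∀ (F : V → V → ℂ), (∀ x y, F x y = - F y x) →
      ∑ x ∈ K, ∑ y ∈ K, F x y = 0 := by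
    intro F hF
    have h1 : ∑ x ∈ K, ∑ y ∈ K, F x y = ∑ y ∈ K, ∑ x ∈ K, F x y := Finset.sum_comm
    have h2 : ∑ y ∈ K, ∑ x ∈ K, F x y = - ∑ x ∈ K, ∑ y ∈ K, F x y := by
      rw [← Finset.sum_neg_distrib]
      refine Finset.sum_congr rfl fun x _ => ?_
      rw [← Finset.sum_neg_distrib]
      refine Finset.sum_congr rfl fun y _ => ?_
      rw [hF y x]
    have h3 := h1.trans h2
    linear_combination h3 / 2
  set F : V → V → ℂ := fun x y => if G.Adj x y
      then conj ((f : L2 V) x) * (g : L2 V) y - conj ((f : L2 V) y) * (g : L2 V) x else 0 with hF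
  have hanti : ∀ x y, F x y = - F y x := by
    intro x y
    rw [hF]
    by_cases h : G.Adj x y
    · simp only [if_pos h, if_pos h.symm]
      ring
    · simp only [if_neg h, if_neg (fun h' => h (SimpleGraph.Adj.symm h'))]
      simp
  have final := key F hanti
  have hdiffeq : ∑ x ∈ K,
        ((∑ y ∈ K, if G.Adj x y
            then conj ((f : L2 V) x - (f : L2 V) y) * (g : L2 V) x else 0)
        - (∑ y ∈ K, if G.Adj x y
            then conj ((f : L2 V) x) * ((g : L2 V) x - (g : L2 V) y) else 0))
      = ∑ x ∈ K, ∑ y ∈ K, F x y := by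
    refine Finset.sum_congr rfl fun x _ => ?_
    rw [← Finset.sum_sub_distrib]
    refine Finset.sum_congr rfl fun y _ => ?_
    rw [hF]
    by_cases h : G.Adj x y
    · simp only [if_pos h, _root_.map_sub]
      ring
    · simp [h]
  rw [← sub_eq_zero, ← Finset.sum_sub_distrib, hdiffeq, final]

theorem adjoint_lap_apply (G : SimpleGraph V) (hG : G.LocallyFinite)
    (hd : Dense (((lapOp G hG).domain : Submodule ℂ (L2 V)) : Set (L2 V)))
    (v : (lapOp G hG).adjoint.domain) (x : V) :
    (((lapOp G hG).adjoint v : L2 V) : ∀ _ : V, ℂ) x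
      = lapA G hG (((v : L2 V)) : ∀ _ : V, ℂ) x := by
  classical
  set δ : L2 V := lp.single 2 x 1 with hδ
  have hδCc : δ ∈ (lapOp G hG).domain := by
    show {w | (δ : ∀ _ : V, ℂ) w ≠ 0}.Finite
    refine Set.Finite.subset (Set.finite_singleton x) ?_
    intro w hw
    simp only [Set.mem_setOf_eq, hδ, single_coe] at hw
    rw [Set.mem_singleton_iff]
    by_contra hwx
    rw [if_neg hwx] at hw
    exact hw rfl
  set d : (lapOp G hG).domain := ⟨δ, hδCc⟩ with hd'
  have h1 : ⟪(lapOp G hG).adjoint v, δ⟫ = ⟪(v : L2 V), (lapOp G hG) d⟫ :=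
    adjoint_isFormalAdjoint hd v d
  have hTd : ∀ w : V, (((lapOp G hG) d : L2 V) : ∀ _ : V, ℂ) w
      = lapA G hG (δ : ∀ _ : V, ℂ) w := fun w => rfl
  -- LHS
  have hLHS : ⟪(lapOp G hG).adjoint v, δ⟫
      = conj ((((lapOp G hG).adjoint v : L2 V) : ∀ _ : V, ℂ) x) := by
    rw [hδ, lp.inner_single_right, RCLike.inner_apply', mul_one]
  -- RHS: compute the finite sum
  set s : Finset V := insert x (@SimpleGraph.neighborFinset V G x (hG x)) with hs
  have hlapδ : ∀ w : V, w ∉ s → lapA G hG (δ : ∀ _ : V, ℂ) w = 0 := by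
    intro w hw
    rw [hs, Finset.mem_insert] at hw
    push_neg at hw
    unfold lapA
    refine Finset.sum_eq_zero fun y hy => ?_
    have hδw : (δ : ∀ _ : V, ℂ) w = 0 := by
      rw [hδ, single_coe, if_neg hw.1]
    have hδy : (δ : ∀ _ : V, ℂ) y = 0 := by
      have hyx : y ≠ x := by
        intro hyx
        apply hw.2
        rw [SimpleGraph.mem_neighborFinset]
        rw [← hyx]
        exact ((SimpleGraph.mem_neighborFinset G w y).mp hy).symm
      rw [hδ, single_coe, if_neg hyx]
    rw [hδw, hδy, sub_zero]
  have hRHS : ⟪(v : L2 V), (lapOp G hG) d⟫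
      = ∑ w ∈ s, conj (((v : L2 V) : ∀ _ : V, ℂ) w) * lapA G hG (δ : ∀ _ : V, ℂ) w := by
    rw [lp.inner_eq_tsum]
    refine (tsum_eq_sum (s := s) ?_).trans (Finset.sum_congr rfl fun w _ => by rw [RCLike.inner_apply', hTd])
    intro w hw
    rw [RCLike.inner_apply', hTd, hlapδ w hw, mul_zero]
  have hxnotinN : x ∉ @SimpleGraph.neighborFinset V G x (hG x) :=
    SimpleGraph.notMem_neighborFinset_self G x
  have hlapδx : lapA G hG (δ : ∀ _ : V, ℂ) x
      = ((@SimpleGraph.neighborFinset V G x (hG x)).card : ℂ) := by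
    unfold lapA
    rw [Finset.sum_congr rfl (fun y hy => ?_), Finset.sum_const, nsmul_eq_mul, mul_one]
    have hyx : y ≠ x := by
      intro h; subst h; exact hxnotinN hy
    rw [hδ, single_coe, single_coe, if_pos rfl, if_neg hyx, sub_zero]
  have hlapδn : ∀ w ∈ @SimpleGraph.neighborFinset V G x (hG x),
      lapA G hG (δ : ∀ _ : V, ℂ) w = -1 := by
    intro w hw
    have hwx : w ≠ x := by
      intro h; subst h; exact hxnotinN hw
    unfold lapA
    have hterm : ∀ y ∈ @SimpleGraph.neighborFinset V G w (hG w),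
        (δ : ∀ _ : V, ℂ) w - (δ : ∀ _ : V, ℂ) y
          = -(if y = x then 1 else 0) := by
      intro y _
      rw [hδ, single_coe, single_coe, if_neg hwx, zero_sub]
    have hxmem : x ∈ @SimpleGraph.neighborFinset V G w (hG w) := by
      rw [SimpleGraph.mem_neighborFinset]
      exact ((SimpleGraph.mem_neighborFinset G x w).mp hw).symm
    rw [Finset.sum_congr rfl hterm, Finset.sum_neg_distrib, Finset.sum_ite_eq', if_pos hxmem]
  have hsum : ∑ w ∈ s, conj (((v : L2 V) : ∀ _ : V, ℂ) w) * lapA G hG (δ : ∀ _ : V, ℂ) w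
      = conj (lapA G hG (((v : L2 V)) : ∀ _ : V, ℂ) x) := by
    rw [hs, Finset.sum_insert hxnotinN, hlapδx,
      Finset.sum_congr rfl (fun w hw => by rw [hlapδn w hw])]
    unfold lapA
    rw [map_sum]
    simp only [_root_.map_sub, mul_neg, mul_one]
    rw [Finset.sum_sub_distrib, Finset.sum_const, nsmul_eq_mul, Finset.sum_neg_distrib]
    ring
  apply (starRingEnd ℂ).injective
  rw [← hLHS, h1, hRHS, hsum]

theorem lap_eigen_zero (G : SimpleGraph V) (hG : G.LocallyFinite)
    (v : L2 V) (z : ℂ) (hre : z.re = 0) (hz : z ≠ 0)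
    (heig : ∀ x, lapA G hG ((v : ∀ _ : V, ℂ)) x = z * (v : ∀ _ : V, ℂ) x) : v = 0 := by
  classical
  by_contra hv
  have hx0 : ∃ x, (v : ∀ _ : V, ℂ) x ≠ 0 := by
    by_contra h
    push_neg at h
    exact hv (lp.ext (funext h))
  obtain ⟨x₀, hx₀⟩ := hx0
  have hsq : Summable (fun x => ‖(v : ∀ _ : V, ℂ) x‖ ^ (2 : ℕ)) := by
    have h := (lp.hasSum_norm (p := 2) (by norm_num) v).summable
    simp only [ENNReal.toReal_ofNat, Real.rpow_two] at h
    exact h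
  have hnorm0 : (0 : ℝ) < ‖(v : ∀ _ : V, ℂ) x₀‖ := norm_pos_iff.mpr hx₀
  have hfin : {x | ‖(v : ∀ _ : V, ℂ) x₀‖ ≤ ‖(v : ∀ _ : V, ℂ) x‖}.Finite := by
    have hc : (0 : ℝ) < ‖(v : ∀ _ : V, ℂ) x₀‖ ^ (2 : ℕ) := by positivity
    have hev : ∀ᶠ x in Filter.cofinite,
        ‖(v : ∀ _ : V, ℂ) x‖ ^ (2 : ℕ) < ‖(v : ∀ _ : V, ℂ) x₀‖ ^ (2 : ℕ) :=
      hsq.tendsto_cofinite_zero.eventually_lt_const hc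
    refine (Filter.eventually_cofinite.mp hev).subset ?_
    intro x hx
    simp only [Set.mem_setOf_eq, not_lt]
    exact pow_le_pow_left₀ (norm_nonneg _) hx 2
  have hne : x₀ ∈ hfin.toFinset := by rw [Set.Finite.mem_toFinset]; exact (le_refl ‖(v : ∀ _ : V, ℂ) x₀‖)
  obtain ⟨xm, hxmS, hxmax⟩ :=
    Finset.exists_max_image hfin.toFinset (fun x => ‖(v : ∀ _ : V, ℂ) x‖) ⟨x₀, hne⟩
  have hx₀m : ‖(v : ∀ _ : V, ℂ) x₀‖ ≤ ‖(v : ∀ _ : V, ℂ) xm‖ := by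
    rw [Set.Finite.mem_toFinset] at hxmS; exact hxmS
  have hM : (0 : ℝ) < ‖(v : ∀ _ : V, ℂ) xm‖ := lt_of_lt_of_le hnorm0 hx₀m
  have hmax : ∀ y, ‖(v : ∀ _ : V, ℂ) y‖ ≤ ‖(v : ∀ _ : V, ℂ) xm‖ := by
    intro y
    by_cases hy : y ∈ hfin.toFinset
    · exact hxmax y hy
    · rw [Set.Finite.mem_toFinset, Set.mem_setOf_eq, not_le] at hy
      exact le_trans hy.le hx₀m
  have heq := heig xm
  unfold lapA at heq
  rw [Finset.sum_sub_distrib, Finset.sum_const, nsmul_eq_mul] at heq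
  set d : ℕ := (@SimpleGraph.neighborFinset V G xm (hG xm)).card with hd
  have heq2 : ∑ y ∈ @SimpleGraph.neighborFinset V G xm (hG xm), (v : ∀ _ : V, ℂ) y
      = ((d : ℂ) - z) * (v : ∀ _ : V, ℂ) xm := by
    linear_combination -heq
  have hnormeq : ‖(d : ℂ) - z‖ * ‖(v : ∀ _ : V, ℂ) xm‖
      ≤ (d : ℝ) * ‖(v : ∀ _ : V, ℂ) xm‖ := by
    calc ‖(d : ℂ) - z‖ * ‖(v : ∀ _ : V, ℂ) xm‖
        = ‖((d : ℂ) - z) * (v : ∀ _ : V, ℂ) xm‖ := (norm_mul _ _).symm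
      _ = ‖∑ y ∈ @SimpleGraph.neighborFinset V G xm (hG xm), (v : ∀ _ : V, ℂ) y‖ := by
          rw [heq2]
      _ ≤ ∑ y ∈ @SimpleGraph.neighborFinset V G xm (hG xm), ‖(v : ∀ _ : V, ℂ) y‖ :=
          norm_sum_le _ _
      _ ≤ ∑ _y ∈ @SimpleGraph.neighborFinset V G xm (hG xm), ‖(v : ∀ _ : V, ℂ) xm‖ :=
          Finset.sum_le_sum fun y _ => hmax y
      _ = (d : ℝ) * ‖(v : ∀ _ : V, ℂ) xm‖ := by rw [Finset.sum_const, nsmul_eq_mul]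
  have hzim : z.im ≠ 0 := by
    intro h
    exact hz (Complex.ext (by simp [hre]) (by simp [h]))
  have hdlt : (d : ℝ) < ‖(d : ℂ) - z‖ := by
    have h2 : (d : ℝ) ^ 2 < ‖(d : ℂ) - z‖ ^ 2 := by
      rw [Complex.sq_norm, Complex.normSq_apply]
      simp only [Complex.sub_re, Complex.sub_im, Complex.natCast_re, Complex.natCast_im, hre]
      have himsq : (0 : ℝ) < z.im ^ 2 := by positivity
      nlinarith [himsq]
    exact lt_of_pow_lt_pow_left₀ 2 (norm_nonneg _) h2
  nlinarith

end Concrete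


/-- The combinatorial (physical) Laplacian of a locally finite graph is
a symmetric operator which is essentially self-adjoint on the finitely supported
functions. -/
theorem laplacian_essentially_selfadjoint {V : Type} [Countable V]
    (G : SimpleGraph V) (hG : G.LocallyFinite) :
    IsSymm (lapOp G hG) ∧ EssSelfAdj (lapOp G hG) := by
  have hd : Dense (((lapOp G hG).domain : Submodule ℂ (L2 V)) : Set (L2 V)) := cc_dense V
  have hsymm := lap_isSymm G hG
  refine ⟨hsymm, ?_⟩
  refine essSelfAdj_of_ker _ hd hsymm ?_ ?_
  · intro u hu
    apply lap_eigen_zero G hG _ Complex.I (by simp) Complex.I_ne_zero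
    intro x
    rw [← adjoint_lap_apply G hG hd u x, hu]
    simp [lp.coeFn_smul]
  · intro u hu
    apply lap_eigen_zero G hG _ (-Complex.I) (by simp) (neg_ne_zero.mpr Complex.I_ne_zero)
    intro x
    rw [← adjoint_lap_apply G hG hd u x, hu]
    simp [lp.coeFn_smul]
    rfl

end DefIdx
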